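/- For α ≥ 1 and real β, the maximal quantum bound √((4 + β²)(1 + α²)) of the generalized tilted-CHSH inequality is strictly greater than the classical bound 2α + β whenever β < 2/α, and they are equal when β = 2/α. -/

import Mathlib

theorem stmt_1 (α β : ℝ) (hα : 1 ≤ α) :
    (β < 2 / α → 2 * α + β < Real.sqrt ((4 + β ^ 2) * (1 + α ^ 2))) ∧
    (β = 2 / α → Real.sqrt ((4 + β ^ 2) * (1 + α ^ 2)) = 2 * α + β) := by
  have hα0 : (0:ℝ) < α := lt_of_lt_of_le one_pos hα
  constructor
  · intro hβ
    have hab : α * β < 2 := by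
      have h2 := (lt_div_iff₀ hα0).mp hβ
      linarith [mul_comm α β]
    have hkey : (2 * α + β) ^ 2 < (4 + β ^ 2) * (1 + α ^ 2) := by
      nlinarith [sq_nonneg (α * β - 2)]
    rcases le_or_gt 0 (2 * α + β) with h | h
    · exact (Real.lt_sqrt h).mpr hkey
    · exact lt_of_lt_of_le h (Real.sqrt_nonneg _)
  · intro hβ
    have : (4 + β ^ 2) * (1 + α ^ 2) = (2 * α + β) ^ 2 := by
      have : α * β = 2 := by rw [hβ]; field_simp [hα0.ne']
      nlinarith
    rw [this, Real.sqrt_sq (by nlinarith [div_pos two_pos hα0, hβ ▸ le_refl β] : 0 ≤ 2 * α + β)]
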